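/- arXiv:2510.17296 — 3 statements merged into one kernel-verified Lean document; each statement's English description precedes it below -/
import Mathlib

section
/- Let Z : (0,∞) → [0,∞) be a measurable function with Z ∈ L²(0,∞) and ∫₀^∞ Z(t)² dt ≤ Y for some constant Y > 0. Suppose there exist α ∈ (1,2), ζ > 0 and an open set M ⊂ (0,∞) such that (∫ₛ^∞ Z(t)² dt)^α ≤ ζ · Z(s)² for almost every s ∈ M. Then Z is integrable on M, and there exists a constant C = C(Y, α, ζ) > 0, independent of the set M, such that ∫_M Z(t) dt ≤ C. -/
open MeasureTheory Set Filter

private lemma aux_alg {Y α ζ : ℝ} (hY : 0 < Y) (hζ : 0 < ζ) (i : ℕ) :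
    (Real.sqrt ((Y * (2:ℝ) ^ (-((i:ℝ) + 1))) ^ α / ζ))⁻¹ * (Y * (2:ℝ) ^ (-(i:ℝ)))
      = Real.sqrt ζ * Y ^ (1 - α / 2) * (2:ℝ) ^ (α / 2) * ((2:ℝ) ^ (α / 2 - 1)) ^ i := by
  have h2 : (0:ℝ) < 2 := two_pos
  have hw : (0:ℝ) < (2:ℝ) ^ (-((i:ℝ) + 1)) := Real.rpow_pos_of_pos h2 _
  have hx : (0:ℝ) < Y * (2:ℝ) ^ (-((i:ℝ) + 1)) := mul_pos hY hw
  have hsζ : (0:ℝ) < Real.sqrt ζ := Real.sqrt_pos.2 hζ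
  have p1 : (0:ℝ) < Real.sqrt ((Y * (2:ℝ) ^ (-((i:ℝ) + 1))) ^ α / ζ) :=
    Real.sqrt_pos.2 (div_pos (Real.rpow_pos_of_pos hx α) hζ)
  have p2 : (0:ℝ) < (2:ℝ) ^ (-(i:ℝ)) := Real.rpow_pos_of_pos h2 _
  have p3 : (0:ℝ) < Y ^ (1 - α / 2) := Real.rpow_pos_of_pos hY _
  have p4 : (0:ℝ) < (2:ℝ) ^ (α / 2) := Real.rpow_pos_of_pos h2 _
  have p5 : (0:ℝ) < ((2:ℝ) ^ (α / 2 - 1)) ^ i := pow_pos (Real.rpow_pos_of_pos h2 _) i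
  have hLpos : (0:ℝ) < (Real.sqrt ((Y * (2:ℝ) ^ (-((i:ℝ) + 1))) ^ α / ζ))⁻¹
      * (Y * (2:ℝ) ^ (-(i:ℝ))) := mul_pos (inv_pos.2 p1) (mul_pos hY p2)
  have hRpos : (0:ℝ) < Real.sqrt ζ * Y ^ (1 - α / 2) * (2:ℝ) ^ (α / 2)
      * ((2:ℝ) ^ (α / 2 - 1)) ^ i := mul_pos (mul_pos (mul_pos hsζ p3) p4) p5
  apply Real.log_injOn_pos (mem_Ioi.2 hLpos) (mem_Ioi.2 hRpos)
  rw [Real.log_mul (inv_pos.2 p1).ne' (mul_pos hY p2).ne',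
    Real.log_inv,
    Real.log_sqrt (div_pos (Real.rpow_pos_of_pos hx α) hζ).le,
    Real.log_div (Real.rpow_pos_of_pos hx α).ne' hζ.ne',
    Real.log_rpow hx,
    Real.log_mul hY.ne' hw.ne',
    Real.log_mul hY.ne' p2.ne',
    Real.log_rpow h2, Real.log_rpow h2,
    Real.log_mul (mul_pos (mul_pos hsζ p3) p4).ne' p5.ne',
    Real.log_mul (mul_pos hsζ p3).ne' p4.ne',
    Real.log_mul hsζ.ne' p3.ne',
    Real.log_sqrt hζ.le, Real.log_rpow hY, Real.log_rpow h2,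
    Real.log_pow, Real.log_rpow h2]
  ring

/-- **Feireisl–Simondon integrability lemma.**
If `Z ≥ 0` is measurable on `(0,∞)`, `Z ∈ L²(0,∞)` with `∫₀^∞ Z² ≤ Y`, and there are
`α ∈ (1,2)`, `ζ > 0` and an open set `M ⊆ (0,∞)` such that
`(∫ₛ^∞ Z²)^α ≤ ζ Z(s)²` for a.e. `s ∈ M`, then `Z ∈ L¹(M)` and
`∫_M Z ≤ C` for a constant `C = C(Y, α, ζ)` independent of `M` (and of `Z`). -/
theorem stmt0 (Y α ζ : ℝ) (hY : 0 < Y) (hα1 : 1 < α) (hα2 : α < 2) (hζ : 0 < ζ) :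
    ∃ C : ℝ, 0 < C ∧
      ∀ (Z : ℝ → ℝ) (M : Set ℝ),
        Measurable Z →
        (∀ t ∈ Set.Ioi (0 : ℝ), 0 ≤ Z t) →
        IntegrableOn (fun t => Z t ^ 2) (Set.Ioi 0) volume →
        (∫ t in Set.Ioi (0 : ℝ), Z t ^ 2) ≤ Y →
        IsOpen M → M ⊆ Set.Ioi 0 →
        (∀ᵐ s ∂(volume.restrict M),
          (∫ t in Set.Ioi s, Z t ^ 2) ^ α ≤ ζ * Z s ^ 2) →
        IntegrableOn Z M volume ∧ (∫ t in M, Z t) ≤ C := by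
  classical
  have h2 : (0:ℝ) < 2 := two_pos
  set r : ℝ := (2:ℝ) ^ (α / 2 - 1) with hrdef
  set K : ℝ := Real.sqrt ζ * Y ^ (1 - α / 2) * (2:ℝ) ^ (α / 2) with hKdef
  have hr0 : 0 < r := Real.rpow_pos_of_pos h2 _
  have hr1 : r < 1 := by
    have : (2:ℝ) ^ (α / 2 - 1) < 2 ^ (0:ℝ) :=
      Real.rpow_lt_rpow_of_exponent_lt one_lt_two (by linarith)
    simpa using this
  have h1r : (0:ℝ) < 1 - r := by linarith
  have hK0 : 0 < K := by
    have := Real.sqrt_pos.2 hζ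
    have := Real.rpow_pos_of_pos hY (1 - α / 2)
    have := Real.rpow_pos_of_pos h2 (α / 2)
    positivity
  refine ⟨K / (1 - r), div_pos hK0 h1r, ?_⟩
  intro Z M hZm hZ0 hZ2 hZY hMo hMs hae
  have hZ2m : Measurable (fun t : ℝ => Z t ^ 2) := hZm.pow_const 2
  have hZ2i : ∀ s : ℝ, 0 ≤ s → IntegrableOn (fun t => Z t ^ 2) (Ioi s) volume := fun s hs =>
    hZ2.mono_set (fun x hx => lt_of_le_of_lt hs hx)
  set e : ℝ := ∫ t in Ioi (0:ℝ), Z t ^ 2 with hedef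
  set G : ℝ → ℝ := fun s => ∫ t in Ioc 0 (max s 0), Z t ^ 2 with hGdef
  have hGcont : Continuous G := by
    rw [continuous_iff_continuousAt]
    intro x
    have hb : x < max x 0 + 1 := lt_of_le_of_lt (le_max_left _ _) (lt_add_one _)
    have hb0 : (0:ℝ) ≤ max x 0 + 1 := by positivity
    have hInt : IntegrableOn (fun t => Z t ^ 2) (Icc 0 (max x 0 + 1)) volume :=
      (integrableOn_Icc_iff_integrableOn_Ioc (by simp)).2 (hZ2.mono_set Ioc_subset_Ioi_self)
    have hcont := intervalIntegral.continuousOn_primitive (μ := volume) hInt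
    have hcomp : ContinuousOn G (Iio (max x 0 + 1)) := by
      refine hcont.comp ((continuous_id.max continuous_const).continuousOn) ?_
      intro s hs
      exact ⟨le_max_right _ _, max_le (le_of_lt hs) hb0⟩
    exact hcomp.continuousAt (isOpen_Iio.mem_nhds hb)
  set E : ℝ → ℝ := fun s => e - G s with hEdef
  have hEcont : Continuous E := continuous_const.sub hGcont
  have hGnn : ∀ s, 0 ≤ G s := fun s =>
    setIntegral_nonneg measurableSet_Ioc fun t _ => sq_nonneg _
  have hEY : ∀ s, E s ≤ Y := fun s => by
    have := hGnn s
    simp only [hEdef]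
    linarith
  have heq : ∀ s : ℝ, 0 ≤ s → (∫ t in Ioi s, Z t ^ 2) = E s := by
    intro s hs
    have hmax : max s 0 = s := max_eq_left hs
    have hsplit : Ioc 0 s ∪ Ioi s = Ioi 0 := Ioc_union_Ioi_eq_Ioi hs
    have hdisj : Disjoint (Ioc 0 s) (Ioi s) := Ioc_disjoint_Ioi le_rfl
    have h1 : e = (∫ t in Ioc 0 s, Z t ^ 2) + ∫ t in Ioi s, Z t ^ 2 := by
      rw [hedef, ← hsplit,
        setIntegral_union hdisj measurableSet_Ioi
          (hZ2.mono_set Ioc_subset_Ioi_self) (hZ2i s hs)]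
    simp only [hEdef, hGdef, hmax]
    linarith
  set v : ℕ → ℝ := fun j => Y * (2:ℝ) ^ (-(j:ℝ)) with hvdef
  have hv0 : ∀ j, 0 < v j := fun j => mul_pos hY (Real.rpow_pos_of_pos h2 _)
  -- Lemma A : integral of Z² over sublevel sets of E
  have lemA : ∀ (c : ℝ) (S : Set ℝ), S ⊆ {x | 0 < x ∧ E x ≤ c} →
      ∫⁻ x in S, ENNReal.ofReal (Z x ^ 2) ≤ ENNReal.ofReal c := by
    intro c S hS
    refine le_trans (lintegral_mono_set hS) ?_
    rcases eq_empty_or_nonempty {x | 0 < x ∧ E x ≤ c} with h | h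
    · simp [h]
    · have hbdd : BddBelow {x | 0 < x ∧ E x ≤ c} := ⟨0, fun x hx => hx.1.le⟩
      have hσ0 : 0 ≤ sInf {x | 0 < x ∧ E x ≤ c} := le_csInf h fun x hx => hx.1.le
      have hσcl : sInf {x | 0 < x ∧ E x ≤ c} ∈ closure {x | 0 < x ∧ E x ≤ c} :=
        csInf_mem_closure h hbdd
      have hEσ : E (sInf {x | 0 < x ∧ E x ≤ c}) ≤ c := by
        have hcl : IsClosed {x | E x ≤ c} := isClosed_le hEcont continuous_const
        exact hcl.closure_subset_iff.2 (fun x hx => hx.2) hσcl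
      have hWsub : {x | 0 < x ∧ E x ≤ c} ⊆ Ici (sInf {x | 0 < x ∧ E x ≤ c}) :=
        fun x hx => csInf_le hbdd hx
      calc ∫⁻ x in {x | 0 < x ∧ E x ≤ c}, ENNReal.ofReal (Z x ^ 2)
          ≤ ∫⁻ x in Ici (sInf {x | 0 < x ∧ E x ≤ c}), ENNReal.ofReal (Z x ^ 2) :=
            lintegral_mono_set hWsub
        _ = ∫⁻ x in Ioi (sInf {x | 0 < x ∧ E x ≤ c}), ENNReal.ofReal (Z x ^ 2) :=
            (setLIntegral_congr Ioi_ae_eq_Ici).symm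
        _ = ENNReal.ofReal (∫ t in Ioi (sInf {x | 0 < x ∧ E x ≤ c}), Z t ^ 2) :=
            (ofReal_integral_eq_lintegral_ofReal (hZ2i _ hσ0)
              (ae_of_all _ fun t => sq_nonneg _)).symm
        _ ≤ ENNReal.ofReal c := ENNReal.ofReal_le_ofReal (by rw [heq _ hσ0]; exact hEσ)
  -- the zero set
  have hT0zero : ∫⁻ x in {x : ℝ | 0 < x ∧ E x ≤ 0}, ENNReal.ofReal (Z x ^ 2) = 0 := by
    refine le_antisymm ?_ (by simp)
    refine ENNReal.le_of_forall_pos_le_add fun ε hε _ => ?_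
    rw [zero_add]
    have := lemA (ε : ℝ) {x : ℝ | 0 < x ∧ E x ≤ 0}
      (fun x hx => ⟨hx.1, hx.2.trans (by exact_mod_cast hε.le)⟩)
    simpa using this
  have hT0m : MeasurableSet {x : ℝ | 0 < x ∧ E x ≤ 0} := by
    have : {x : ℝ | 0 < x ∧ E x ≤ 0} = Ioi 0 ∩ E ⁻¹' (Iic 0) := by
      ext x
      simp only [mem_setOf_eq, mem_inter_iff, mem_Ioi, mem_preimage, mem_Iic]
    rw [this]
    exact measurableSet_Ioi.inter (hEcont.measurable measurableSet_Iic)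
  have hZT0 : ∀ᵐ x ∂volume.restrict {x : ℝ | 0 < x ∧ E x ≤ 0}, Z x = 0 := by
    have hmeas : Measurable fun x => ENNReal.ofReal (Z x ^ 2) := hZ2m.ennreal_ofReal
    have := (lintegral_eq_zero_iff hmeas).1 hT0zero
    filter_upwards [this] with x hx
    have hx2 : Z x ^ 2 ≤ 0 := by simpa [ENNReal.ofReal_eq_zero] using hx
    nlinarith [sq_nonneg (Z x)]
  -- the dyadic pieces
  set A : ℕ → Set ℝ := fun i => {x | 0 < x ∧ v (i + 1) < E x ∧ E x ≤ v i} with hAdef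
  have hAm : ∀ i, MeasurableSet (A i) := by
    intro i
    have : A i = Ioi 0 ∩ E ⁻¹' (Ioc (v (i + 1)) (v i)) := by
      ext x
      simp only [hAdef, mem_setOf_eq, mem_inter_iff, mem_Ioi, mem_preimage, mem_Ioc]
    rw [this]
    exact measurableSet_Ioi.inter (hEcont.measurable measurableSet_Ioc)
  have hMm : MeasurableSet M := hMo.measurableSet
  -- coverage
  have hcover : M ⊆ {x : ℝ | 0 < x ∧ E x ≤ 0} ∪ ⋃ i, A i := by
    intro s hs
    have hs0 : 0 < s := hMs hs
    by_cases hE0 : E s ≤ 0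
    · exact Or.inl ⟨hs0, hE0⟩
    · push_neg at hE0
      have hex : ∃ j, v j < E s := by
        obtain ⟨n, hn⟩ := pow_unbounded_of_one_lt (Y / E s) one_lt_two
        refine ⟨n, ?_⟩
        have hvn : v n = Y / 2 ^ n := by
          show Y * (2:ℝ) ^ (-(n:ℝ)) = Y / 2 ^ n
          rw [Real.rpow_neg h2.le, Real.rpow_natCast]
          ring
        rw [hvn, div_lt_iff₀ (by positivity)]
        calc Y = Y / E s * E s := by field_simp
          _ < 2 ^ n * E s := mul_lt_mul_of_pos_right hn hE0
          _ = E s * 2 ^ n := by ring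
      have hj := Nat.find_spec hex
      have hj0 : Nat.find hex ≠ 0 := by
        intro h0
        rw [h0] at hj
        have hv0Y : v 0 = Y := by simp [hvdef]
        rw [hv0Y] at hj
        exact absurd (hEY s) (not_le.2 hj)
      obtain ⟨i, hik⟩ := Nat.exists_eq_succ_of_ne_zero hj0
      have hlt : v (i + 1) < E s := by rw [hik] at hj; exact hj
      have hle : E s ≤ v i := not_lt.1 (Nat.find_min hex (by omega))
      exact Or.inr (mem_iUnion.2 ⟨i, hs0, hlt, hle⟩)
  -- key bound per piece
  have hkey : ∀ i, ∫⁻ x in M ∩ A i, ENNReal.ofReal (Z x) ≤ ENNReal.ofReal (K * r ^ i) := by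
    intro i
    set m : ℝ := Real.sqrt (v (i + 1) ^ α / ζ) with hmdef
    have hm0 : 0 < m := Real.sqrt_pos.2 (div_pos (Real.rpow_pos_of_pos (hv0 _) _) hζ)
    have hptw : ∀ᵐ s ∂volume.restrict (M ∩ A i),
        ENNReal.ofReal (Z s) ≤ ENNReal.ofReal m⁻¹ * ENNReal.ofReal (Z s ^ 2) := by
      have h1 := ae_restrict_of_ae_restrict_of_subset (inter_subset_left : M ∩ A i ⊆ M) hae
      filter_upwards [h1, ae_restrict_mem (hMm.inter (hAm i))] with s hsζ hsmem
      have hs0 : 0 < s := hsmem.2.1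
      have hZs0 : 0 ≤ Z s := hZ0 s hs0
      have hEs : v (i + 1) < E s := hsmem.2.2.1
      rw [heq s hs0.le] at hsζ
      have h3 : v (i + 1) ^ α ≤ ζ * Z s ^ 2 :=
        le_trans (Real.rpow_le_rpow (hv0 _).le hEs.le (by linarith)) hsζ
      have h4 : v (i + 1) ^ α / ζ ≤ Z s ^ 2 := by
        rw [div_le_iff₀ hζ]
        linarith
      have h5 : m ≤ Z s := by
        have := Real.sqrt_le_sqrt h4
        rwa [← hmdef, Real.sqrt_sq hZs0] at this
      have h6 : Z s ≤ Z s ^ 2 * m⁻¹ := by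
        rw [← div_eq_mul_inv, le_div_iff₀ hm0]
        nlinarith [h5, hZs0]
      calc ENNReal.ofReal (Z s) ≤ ENNReal.ofReal (Z s ^ 2 * m⁻¹) := ENNReal.ofReal_le_ofReal h6
        _ = ENNReal.ofReal m⁻¹ * ENNReal.ofReal (Z s ^ 2) := by
            rw [mul_comm, ENNReal.ofReal_mul (by positivity)]
    have hv1 : v (i + 1) = Y * (2:ℝ) ^ (-((i:ℝ) + 1)) := by
      rw [hvdef]
      norm_num
    calc ∫⁻ x in M ∩ A i, ENNReal.ofReal (Z x)
        ≤ ∫⁻ x in M ∩ A i, ENNReal.ofReal m⁻¹ * ENNReal.ofReal (Z x ^ 2) :=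
          lintegral_mono_ae hptw
      _ = ENNReal.ofReal m⁻¹ * ∫⁻ x in M ∩ A i, ENNReal.ofReal (Z x ^ 2) :=
          lintegral_const_mul _ hZ2m.ennreal_ofReal
      _ ≤ ENNReal.ofReal m⁻¹ * ENNReal.ofReal (v i) := by
          apply mul_le_mul_right
          exact lemA (v i) _ (fun x hx => ⟨hx.2.1, hx.2.2.2⟩)
      _ = ENNReal.ofReal (m⁻¹ * v i) := (ENNReal.ofReal_mul (inv_nonneg.2 hm0.le)).symm
      _ = ENNReal.ofReal (K * r ^ i) := by
          congr 1
          rw [hmdef, hv1, hvdef, hKdef, hrdef]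
          exact aux_alg hY hζ i
  -- zero contribution of the zero set
  have hzero : ∫⁻ x in M ∩ {x : ℝ | 0 < x ∧ E x ≤ 0}, ENNReal.ofReal (Z x) = 0 := by
    have hz := ae_restrict_of_ae_restrict_of_subset (inter_subset_right : M ∩ {x : ℝ | 0 < x ∧ E x ≤ 0} ⊆ _) hZT0
    calc ∫⁻ x in M ∩ {x : ℝ | 0 < x ∧ E x ≤ 0}, ENNReal.ofReal (Z x)
        = ∫⁻ _ in M ∩ {x : ℝ | 0 < x ∧ E x ≤ 0}, 0 :=
          lintegral_congr_ae (hz.mono fun x hx => by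
            show ENNReal.ofReal (Z x) = 0
            rw [hx, ENNReal.ofReal_zero])
      _ = 0 := lintegral_zero
  -- total bound
  have htotal : ∫⁻ x in M, ENNReal.ofReal (Z x) ≤ ENNReal.ofReal (K / (1 - r)) := by
    have hsub : M ⊆ (M ∩ {x : ℝ | 0 < x ∧ E x ≤ 0}) ∪ ⋃ i, M ∩ A i := by
      intro x hx
      rcases hcover hx with h | h
      · exact Or.inl ⟨hx, h⟩
      · obtain ⟨i, hi⟩ := mem_iUnion.1 h
        exact Or.inr (mem_iUnion.2 ⟨i, hx, hi⟩)
    calc ∫⁻ x in M, ENNReal.ofReal (Z x)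
        ≤ ∫⁻ x in (M ∩ {x : ℝ | 0 < x ∧ E x ≤ 0}) ∪ ⋃ i, M ∩ A i, ENNReal.ofReal (Z x) :=
          lintegral_mono_set hsub
      _ ≤ (∫⁻ x in M ∩ {x : ℝ | 0 < x ∧ E x ≤ 0}, ENNReal.ofReal (Z x))
            + ∫⁻ x in ⋃ i, M ∩ A i, ENNReal.ofReal (Z x) := lintegral_union_le _ _ _
      _ ≤ 0 + ∑' i, ∫⁻ x in M ∩ A i, ENNReal.ofReal (Z x) := by
          gcongr
          · exact hzero.le
          · exact lintegral_iUnion_le _ _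
      _ ≤ ∑' i, ENNReal.ofReal (K * r ^ i) := by
          rw [zero_add]
          exact ENNReal.tsum_le_tsum hkey
      _ = ENNReal.ofReal K * ∑' i, (ENNReal.ofReal r) ^ i := by
          simp_rw [ENNReal.ofReal_mul hK0.le, ENNReal.ofReal_pow hr0.le]
          rw [ENNReal.tsum_mul_left]
      _ = ENNReal.ofReal K * (1 - ENNReal.ofReal r)⁻¹ := by rw [ENNReal.tsum_geometric]
      _ = ENNReal.ofReal (K / (1 - r)) := by
          rw [div_eq_mul_inv, ENNReal.ofReal_mul hK0.le, ENNReal.ofReal_inv_of_pos h1r,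
            ENNReal.ofReal_sub _ hr0.le, ENNReal.ofReal_one]
  -- conclusion
  have hZnnM : ∀ᵐ x ∂volume.restrict M, 0 ≤ Z x :=
    (ae_restrict_iff' hMm).2 (ae_of_all _ fun x hx => hZ0 x (hMs hx))
  have hlint_eq : ∫⁻ x in M, ‖Z x‖ₑ = ∫⁻ x in M, ENNReal.ofReal (Z x) := by
    refine lintegral_congr_ae (hZnnM.mono fun x hx => ?_)
    show ‖Z x‖ₑ = ENNReal.ofReal (Z x)
    exact Real.enorm_eq_ofReal hx
  have hint : IntegrableOn Z M volume := by
    refine ⟨hZm.aestronglyMeasurable.restrict, ?_⟩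
    rw [hasFiniteIntegral_def, hlint_eq]
    exact lt_of_le_of_lt htotal ENNReal.ofReal_lt_top
  refine ⟨hint, ?_⟩
  rw [integral_eq_lintegral_of_nonneg_ae hZnnM hZm.aestronglyMeasurable.restrict]
  calc (∫⁻ x in M, ENNReal.ofReal (Z x)).toReal
      ≤ (ENNReal.ofReal (K / (1 - r))).toReal :=
        ENNReal.toReal_mono ENNReal.ofReal_ne_top htotal
    _ = K / (1 - r) := ENNReal.toReal_ofReal (div_pos hK0 h1r).le
end

section
/- Let E : (0,∞) → ℝ be nonincreasing with lim_{t→∞} E(t) = E∞ ∈ ℝ. Let Z : (0,∞) → [0,∞) be measurable with Z ∈ L²(0,∞), and let m* > 0 be such that m* ∫ₛᵗ Z(τ)² dτ ≤ E(s) − E(t) for every t > 0 and almost every s ∈ (0,t]. Assume there exist ϑ ∈ (0,1/2), t* > 0, M > 0 and C > 0 such that for almost every s ≥ t* with Z(s) ≤ M one has (E(s) − E∞)^{1−ϑ} ≤ C·Z(s). Then Z is integrable on (t*,∞), i.e. Z ∈ L¹(t*,∞). -/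
open MeasureTheory Set Filter

set_option maxHeartbeats 2000000 in
/-- **Łojasiewicz–Simon argument on the set of good times.**
Let `E` be nonincreasing on `(0,∞)` with `E(t) → E∞`, let `Z ≥ 0` be in `L²(0,∞)`, and
assume the energy inequality `m* ∫ₛᵗ Z² ≤ E(s) − E(t)` for all `t > 0` and a.e.
`s ∈ (0,t]`. If for some `ϑ ∈ (0,1/2)`, `t* > 0`, `M > 0`, `C > 0` the Łojasiewicz–Simon
inequality `(E(s) − E∞)^{1−ϑ} ≤ C Z(s)` holds for a.e. `s ≥ t*` with `Z(s) ≤ M`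
(the "good" times), then `Z ∈ L¹(t*,∞)`. -/
theorem stmt7 (E : ℝ → ℝ) (Einf : ℝ) (Z : ℝ → ℝ) (mstar ϑ tstar M C : ℝ)
    (hE : AntitoneOn E (Set.Ioi 0))
    (hElim : Tendsto E atTop (nhds Einf))
    (hZmeas : Measurable Z)
    (hZnn : ∀ t ∈ Set.Ioi (0 : ℝ), 0 ≤ Z t)
    (hZL2 : IntegrableOn (fun t => Z t ^ 2) (Set.Ioi 0) volume)
    (hm : 0 < mstar)
    (henergy : ∀ t > (0 : ℝ), ∀ᵐ s ∂(volume.restrict (Set.Ioc 0 t)),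
        mstar * ∫ τ in Set.Ioc s t, Z τ ^ 2 ≤ E s - E t)
    (hϑ : ϑ ∈ Set.Ioo (0 : ℝ) (1 / 2)) (ht : 0 < tstar) (hM : 0 < M) (hC : 0 < C)
    (hLS : ∀ᵐ s ∂(volume.restrict (Set.Ici tstar)),
        Z s ≤ M → (E s - Einf) ^ (1 - ϑ) ≤ C * Z s) :
    IntegrableOn Z (Set.Ioi tstar) volume := by
  obtain ⟨hϑ0, hϑ2⟩ := hϑ
  have hϑ1 : ϑ < 1 := by linarith
  -- constants
  set α : ℝ := 2 * (1 - ϑ) with hαdef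
  have hα1 : 1 < α := by rw [hαdef]; linarith
  have hα0 : (0:ℝ) < α := by linarith
  have hαne : α ≠ 0 := ne_of_gt hα0
  have hα1ne : α - 1 ≠ 0 := ne_of_gt (by linarith)
  set β : ℝ := 1 / (α - 1) with hβdef
  have hβ0 : 0 < β := by rw [hβdef]; exact one_div_pos.mpr (by linarith)
  have hβα : β * α = β + 1 := by rw [hβdef]; field_simp; ring
  have hβ1 : 1 < β := by
    rw [hβdef, lt_div_iff₀ (by linarith)]
    rw [hαdef]; linarith
  set κ : ℝ := mstar ^ α / C ^ 2 with hκdef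
  have hκ0 : 0 < κ := div_pos (Real.rpow_pos_of_pos hm α) (by positivity)
  -- the tail energy
  set F : ℝ → ℝ := fun s => ∫ τ in Ioi s, Z τ ^ 2 with hFdef
  have hZ2Ioi : ∀ s : ℝ, 0 < s → IntegrableOn (fun τ => Z τ ^ 2) (Ioi s) volume :=
    fun s hs => hZL2.mono_set (Ioi_subset_Ioi hs.le)
  have hZ2Ioc : ∀ a b : ℝ, 0 < a → IntegrableOn (fun τ => Z τ ^ 2) (Ioc a b) volume :=
    fun a b ha => hZL2.mono_set (fun x hx => lt_trans ha hx.1)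
  have hZIoc : ∀ a b : ℝ, 0 < a → IntegrableOn Z (Ioc a b) volume := by
    intro a b ha
    have h1 : IntegrableOn (fun τ => Z τ ^ 2 + 1) (Ioc a b) volume :=
      (hZ2Ioc a b ha).add (integrableOn_const measure_Ioc_lt_top.ne)
    refine h1.mono' hZmeas.aestronglyMeasurable.restrict ?_
    refine ae_of_all _ fun x => ?_
    have h2 : |Z x| ≤ Z x ^ 2 + 1 := by nlinarith [sq_abs (Z x), sq_nonneg (|Z x| - 1)]
    simpa [Real.norm_eq_abs] using h2
  have hF0 : ∀ s, 0 ≤ F s := fun s => setIntegral_nonneg measurableSet_Ioi fun τ _ => sq_nonneg _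
  have hFsplit : ∀ a b : ℝ, 0 < a → a ≤ b → F a = (∫ τ in Ioc a b, Z τ ^ 2) + F b := by
    intro a b ha hab
    have h := setIntegral_union (f := fun τ => Z τ ^ 2) (μ := volume)
      Ioc_disjoint_Ioi_same measurableSet_Ioi (hZ2Ioc a b ha) (hZ2Ioi b (lt_of_lt_of_le ha hab))
    rw [Ioc_union_Ioi_eq_Ioi hab] at h
    exact h
  have hFanti : ∀ a b : ℝ, 0 < a → a ≤ b → F b ≤ F a := by
    intro a b ha hab
    have h := hFsplit a b ha hab
    have h2 : 0 ≤ ∫ τ in Ioc a b, Z τ ^ 2 :=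
      setIntegral_nonneg measurableSet_Ioc fun τ _ => sq_nonneg _
    linarith
  -- passing to the limit in the energy inequality
  have hEnergy : ∀ᵐ s : ℝ, 0 < s → mstar * F s ≤ E s - Einf := by
    have h1 : ∀ n : ℕ, ∀ᵐ s : ℝ, s ∈ Ioc (0:ℝ) ((n:ℝ)+1) →
        mstar * ∫ τ in Ioc s ((n:ℝ)+1), Z τ ^ 2 ≤ E s - E ((n:ℝ)+1) := fun n =>
      (ae_restrict_iff' measurableSet_Ioc).mp (henergy ((n:ℝ)+1) (by positivity))
    rw [← ae_all_iff] at h1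
    filter_upwards [h1] with s hs hs0
    have hU : ⋃ n : ℕ, Ioc s ((n:ℝ)+1) = Ioi s := by
      ext τ
      simp only [mem_iUnion, mem_Ioc, mem_Ioi]
      constructor
      · rintro ⟨n, h, _⟩; exact h
      · intro h
        obtain ⟨n, hn⟩ := exists_nat_ge τ
        exact ⟨n, h, by linarith⟩
    have hconv1 : Tendsto (fun n : ℕ => ∫ τ in Ioc s ((n:ℝ)+1), Z τ ^ 2) atTop (nhds (F s)) := by
      have hmono : Monotone fun n : ℕ => Ioc s ((n:ℝ)+1) := fun i j hij =>
        Ioc_subset_Ioc le_rfl (by have := (Nat.cast_le (α := ℝ)).mpr hij; linarith)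
      have h := tendsto_setIntegral_of_monotone (f := fun τ => Z τ ^ 2) (μ := volume)
        (fun n : ℕ => measurableSet_Ioc) hmono (by rw [hU]; exact hZ2Ioi s hs0)
      rwa [hU] at h
    have hconv2 : Tendsto (fun n : ℕ => E s - E ((n:ℝ)+1)) atTop (nhds (E s - Einf)) := by
      have h2 : Tendsto (fun n : ℕ => ((n:ℝ)+1)) atTop atTop :=
        tendsto_atTop_add_const_right _ 1 tendsto_natCast_atTop_atTop
      exact tendsto_const_nhds.sub (hElim.comp h2)
    refine le_of_tendsto_of_tendsto (hconv1.const_mul mstar) hconv2 ?_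
    filter_upwards [eventually_ge_atTop ⌈s⌉₊] with n hn
    have hsn : s ≤ (n:ℝ) + 1 := by
      have h3 := Nat.le_ceil s
      have h4 : ((⌈s⌉₊ : ℕ) : ℝ) ≤ (n:ℝ) := Nat.cast_le.mpr hn
      linarith
    exact hs n ⟨hs0, hsn⟩
  -- key pointwise lower bound for Z²
  have hmin : ∀ᵐ s : ℝ, s ∈ Ici tstar → min (M ^ 2) (κ * F s ^ α) ≤ Z s ^ 2 := by
    have hLS' : ∀ᵐ s : ℝ, s ∈ Ici tstar → (Z s ≤ M → (E s - Einf) ^ (1 - ϑ) ≤ C * Z s) :=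
      (ae_restrict_iff' measurableSet_Ici).mp hLS
    filter_upwards [hEnergy, hLS'] with s h1 h2 hs
    have hs0 : (0:ℝ) < s := lt_of_lt_of_le ht hs
    have hZs : 0 ≤ Z s := hZnn s hs0
    have hmF : 0 ≤ mstar * F s := mul_nonneg hm.le (hF0 s)
    rcases le_or_gt (Z s) M with hzm | hzm
    · have h3 : (mstar * F s) ^ (1 - ϑ) ≤ C * Z s :=
        le_trans (Real.rpow_le_rpow hmF (h1 hs0) (by linarith)) (h2 hs hzm)
      have h4 : ((mstar * F s) ^ (1 - ϑ)) ^ 2 ≤ (C * Z s) ^ 2 :=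
        pow_le_pow_left₀ (Real.rpow_nonneg hmF _) h3 2
      have h5 : ((mstar * F s) ^ (1 - ϑ)) ^ 2 = mstar ^ α * F s ^ α := by
        rw [sq, ← Real.rpow_add' hmF (by rw [show (1-ϑ)+(1-ϑ) = α by rw [hαdef]; ring]; exact hαne),
          show (1-ϑ)+(1-ϑ) = α by rw [hαdef]; ring]
        exact Real.mul_rpow hm.le (hF0 s)
      have h6 : κ * F s ^ α ≤ Z s ^ 2 := by
        rw [hκdef, div_mul_eq_mul_div, div_le_iff₀ (by positivity)]
        calc mstar ^ α * F s ^ α = ((mstar * F s) ^ (1-ϑ)) ^ 2 := h5.symm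
          _ ≤ (C * Z s) ^ 2 := h4
          _ = Z s ^ 2 * C ^ 2 := by ring
      exact le_trans (min_le_right _ _) h6
    · refine le_trans (min_le_left _ _) ?_
      nlinarith
  -- the doubling estimate for F beyond T0
  set T0 : ℝ := max tstar (F tstar / M ^ 2 + 1) with hT0def
  have hT0t : tstar ≤ T0 := le_max_left _ _
  have hT00 : 0 < T0 := lt_of_lt_of_le ht hT0t
  have hT0F : F tstar / M ^ 2 < T0 := lt_of_lt_of_le (lt_add_one _) (le_max_right _ _)
  have hB : ∀ a : ℝ, T0 ≤ a → F (2*a) ^ α ≤ F a / (κ * a) := by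
    intro a haT
    have ha0 : 0 < a := lt_of_lt_of_le hT00 haT
    have hat : tstar ≤ a := le_trans hT0t haT
    have h2a : a ≤ 2*a := by linarith
    have key : a * min (M ^ 2) (κ * F (2*a) ^ α) ≤ F a - F (2*a) := by
      have hsplit := hFsplit a (2*a) ha0 h2a
      have hlow : ∀ᵐ τ ∂(volume.restrict (Ioc a (2*a))),
          min (M ^ 2) (κ * F (2*a) ^ α) ≤ Z τ ^ 2 := by
        rw [ae_restrict_iff' measurableSet_Ioc]
        filter_upwards [hmin] with τ hτ hmem
        have hτ0 : (0:ℝ) < τ := lt_of_le_of_lt ha0.le hmem.1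
        have hτt : τ ∈ Ici tstar := le_trans hat (le_of_lt hmem.1)
        refine le_trans (min_le_min le_rfl ?_) (hτ hτt)
        exact mul_le_mul_of_nonneg_left
          (Real.rpow_le_rpow (hF0 _) (hFanti τ (2*a) hτ0 hmem.2) hα0.le) hκ0.le
      have hint : (∫ _ in Ioc a (2*a), min (M ^ 2) (κ * F (2*a) ^ α)) ≤
          ∫ τ in Ioc a (2*a), Z τ ^ 2 :=
        integral_mono_ae (integrableOn_const measure_Ioc_lt_top.ne)
          (hZ2Ioc a (2*a) ha0) hlow
      rw [setIntegral_const, Real.volume_real_Ioc_of_le h2a,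
        show 2*a - a = a by ring, smul_eq_mul] at hint
      linarith
    have hFa : F a ≤ F tstar := hFanti tstar a ht hat
    by_cases hcase : κ * F (2*a) ^ α ≤ M ^ 2
    · rw [min_eq_right hcase] at key
      have h7 := hF0 (2*a)
      rw [le_div_iff₀ (by positivity)]
      nlinarith
    · exfalso
      push_neg at hcase
      rw [min_eq_left hcase.le] at key
      have h7 := hF0 (2*a)
      have h8 : a ≤ F tstar / M ^ 2 := by
        rw [le_div_iff₀ (by positivity)]
        nlinarith
      linarith
  have hB2 : ∀ a : ℝ, T0 ≤ a → F (2*a) ≤ (F a / (κ * a)) ^ (1/α) := by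
    intro a haT
    have h1 := hB a haT
    have h2 : ((F (2*a)) ^ α) ^ α⁻¹ ≤ (F a / (κ*a)) ^ α⁻¹ :=
      Real.rpow_le_rpow (Real.rpow_nonneg (hF0 _) _) h1 (by positivity)
    rw [Real.rpow_rpow_inv (hF0 _) hαne] at h2
    rwa [one_div]
  -- the dyadic sequence
  set a : ℕ → ℝ := fun n => T0 * 2 ^ n with hadef
  have ha0pos : ∀ n, 0 < a n := fun n => by
    simp only [hadef]; positivity
  have hone_le : ∀ n : ℕ, (1:ℝ) ≤ 2 ^ n := fun n => one_le_pow₀ (by norm_num)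
  have haT : ∀ n, T0 ≤ a n := fun n => by
    simp only [hadef]
    nlinarith [hone_le n, hT00]
  have hasucc : ∀ n, a (n+1) = 2 * a n := fun n => by simp only [hadef]; ring
  have hamono : ∀ m n : ℕ, m ≤ n → a m ≤ a n := by
    intro m n hmn
    simp only [hadef]
    exact mul_le_mul_of_nonneg_left (pow_le_pow_right₀ (by norm_num) hmn) hT00.le
  -- the constant K and the decay F (a n) ≤ K (a n)^(-β)
  set K : ℝ := max (max 1 (F tstar * T0 ^ β)) ((2 ^ β / κ ^ (1/α)) ^ (α / (α - 1))) with hKdef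
  have hK1 : (1:ℝ) ≤ K := le_trans (le_max_left _ _) (le_max_left _ _)
  have hK0 : (0:ℝ) < K := lt_of_lt_of_le one_pos hK1
  have hKbase : F tstar * T0 ^ β ≤ K := le_trans (le_max_right _ _) (le_max_left _ _)
  have hKstep : (K / κ) ^ (1/α) * 2 ^ β ≤ K := by
    have hκpow : (0:ℝ) < κ ^ (1/α) := Real.rpow_pos_of_pos hκ0 _
    have e1 : (2:ℝ) ^ β ≤ K ^ ((α-1)/α) * κ ^ (1/α) := by
      have hLK : ((2:ℝ) ^ β / κ ^ (1/α)) ^ (α/(α-1)) ≤ K := le_max_right _ _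
      have h2 : (((2:ℝ) ^ β / κ ^ (1/α)) ^ (α/(α-1))) ^ ((α-1)/α) ≤ K ^ ((α-1)/α) :=
        Real.rpow_le_rpow (Real.rpow_nonneg (by positivity) _) hLK
          (div_nonneg (by linarith) hα0.le)
      rw [← Real.rpow_mul (by positivity), show (α/(α-1))*((α-1)/α) = 1 by field_simp,
        Real.rpow_one] at h2
      rw [div_le_iff₀ hκpow] at h2
      exact h2
    calc (K / κ) ^ (1/α) * 2 ^ β = (K ^ (1/α) / κ ^ (1/α)) * 2 ^ β := by
          rw [Real.div_rpow hK0.le hκ0.le]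
      _ ≤ (K ^ (1/α) / κ ^ (1/α)) * (K ^ ((α-1)/α) * κ ^ (1/α)) := by
          refine mul_le_mul_of_nonneg_left e1 ?_
          positivity
      _ = K ^ (1/α) * K ^ ((α-1)/α) := by field_simp
      _ = K ^ (1/α + (α-1)/α) := (Real.rpow_add hK0 _ _).symm
      _ = K := by rw [show 1/α + (α-1)/α = 1 by field_simp; ring, Real.rpow_one]
  have hu : ∀ n, F (a n) ≤ K * (a n) ^ (-β) := by
    intro n
    induction n with
    | zero =>
      have ha0 : a 0 = T0 := by rw [hadef]; norm_num
      rw [ha0]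
      have h1 : F T0 ≤ F tstar := hFanti tstar T0 ht hT0t
      have h2 : F tstar = (F tstar * T0 ^ β) * T0 ^ (-β) := by
        rw [mul_assoc, ← Real.rpow_add hT00, add_neg_cancel, Real.rpow_zero, mul_one]
      rw [h2] at h1
      exact le_trans h1 (mul_le_mul_of_nonneg_right hKbase (Real.rpow_nonneg hT00.le _))
    | succ n ih =>
      have hx0 : 0 < a n := ha0pos n
      have h1 : F (a (n+1)) ≤ (F (a n) / (κ * a n)) ^ (1/α) := by
        rw [hasucc n]; exact hB2 (a n) (haT n)
      have h2 : (F (a n) / (κ * a n)) ^ (1/α) ≤ ((K * (a n) ^ (-β)) / (κ * a n)) ^ (1/α) := by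
        refine Real.rpow_le_rpow (by positivity) ?_ (by positivity)
        gcongr
      have e0 : (K * (a n) ^ (-β)) / (κ * a n) = (K/κ) * (a n) ^ (-β-1) := by
        rw [show (-β-1 : ℝ) = -β + (-1) by ring, Real.rpow_add hx0, Real.rpow_neg_one]
        field_simp
      have e1 : ((K * (a n) ^ (-β)) / (κ * a n)) ^ (1/α) = (K/κ) ^ (1/α) * (a n) ^ (-β) := by
        rw [e0, Real.mul_rpow (by positivity) (Real.rpow_nonneg hx0.le _),
          ← Real.rpow_mul hx0.le, show (-β-1)*(1/α) = -β by
            rw [mul_one_div, div_eq_iff hαne]; linarith [hβα]]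
      have e2 : (a n) ^ (-β) = 2 ^ β * (a (n+1)) ^ (-β) := by
        rw [hasucc n, Real.mul_rpow (by norm_num) hx0.le, ← mul_assoc,
          ← Real.rpow_add two_pos, add_neg_cancel, Real.rpow_zero, one_mul]
      calc F (a (n+1)) ≤ (F (a n) / (κ * a n)) ^ (1/α) := h1
        _ ≤ ((K * (a n) ^ (-β)) / (κ * a n)) ^ (1/α) := h2
        _ = (K/κ) ^ (1/α) * (a n) ^ (-β) := e1
        _ = ((K/κ) ^ (1/α) * 2 ^ β) * (a (n+1)) ^ (-β) := by rw [e2]; ring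
        _ ≤ K * (a (n+1)) ^ (-β) :=
            mul_le_mul_of_nonneg_right hKstep (Real.rpow_nonneg (ha0pos (n+1)).le _)
  -- dyadic piece bounds for ∫ Z
  set γ : ℝ := (1-β)/2 with hγdef
  have hγneg : γ < 0 := by rw [hγdef]; linarith
  set r : ℝ := (2:ℝ) ^ γ with hrdef
  have hr0 : 0 < r := Real.rpow_pos_of_pos two_pos γ
  have hr1 : r < 1 := Real.rpow_lt_one_of_one_lt_of_neg one_lt_two hγneg
  set D : ℝ := ((K+1)/2) * T0 ^ γ with hDdef
  have hD0 : 0 < D := by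
    have := Real.rpow_pos_of_pos hT00 γ
    rw [hDdef]; positivity
  have hpow : ∀ n : ℕ, (a n) ^ γ = T0 ^ γ * r ^ n := by
    intro n
    rw [hadef]
    simp only
    rw [Real.mul_rpow hT00.le (by positivity)]
    congr 1
    rw [← Real.rpow_natCast (2:ℝ) n, ← Real.rpow_mul (by norm_num : (0:ℝ) ≤ 2), hrdef,
      ← Real.rpow_natCast ((2:ℝ) ^ γ) n, ← Real.rpow_mul (by norm_num : (0:ℝ) ≤ 2),
      mul_comm]
  have hpiece : ∀ n : ℕ, (∫ s in Ioc (a n) (a (n+1)), Z s) ≤ D * r ^ n := by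
    intro n
    have hx0 : 0 < a n := ha0pos n
    set ε : ℝ := (a n) ^ (-(β+1)/2) with hεdef
    have hε0 : 0 < ε := Real.rpow_pos_of_pos hx0 _
    have hb1 : (∫ s in Ioc (a n) (a (n+1)), Z s) ≤
        ∫ s in Ioc (a n) (a (n+1)), (Z s ^ 2 / (2*ε) + ε/2) := by
      refine setIntegral_mono_on (hZIoc _ _ hx0) ?_ measurableSet_Ioc ?_
      · exact ((hZ2Ioc _ _ hx0).div_const _).add
          (integrableOn_const measure_Ioc_lt_top.ne)
      · intro s _
        have h := sq_nonneg (Z s - ε)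
        rw [div_add' _ _ _ (by positivity), le_div_iff₀ (by positivity)]
        nlinarith
    have hb2 : (∫ s in Ioc (a n) (a (n+1)), (Z s ^ 2 / (2*ε) + ε/2)) =
        (∫ s in Ioc (a n) (a (n+1)), Z s ^ 2) / (2*ε) + (ε/2) * (a n) := by
      rw [integral_add ((hZ2Ioc _ _ hx0).div_const _)
        (integrableOn_const measure_Ioc_lt_top.ne), integral_div, setIntegral_const,
        Real.volume_real_Ioc_of_le (by rw [hasucc n]; linarith), hasucc n,
        show 2 * a n - a n = a n by ring, smul_eq_mul]
      ring
    have hb3 : (∫ s in Ioc (a n) (a (n+1)), Z s ^ 2) ≤ K * (a n) ^ (-β) := by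
      have hsp := hFsplit (a n) (a (n+1)) hx0 (by rw [hasucc]; linarith)
      have h7 := hF0 (a (n+1))
      have h8 := hu n
      linarith
    have halg : (K * (a n) ^ (-β)) / (2*ε) + (ε/2) * (a n) = ((K+1)/2) * (a n) ^ γ := by
      have e1 : (a n) ^ (-β) / ε = (a n) ^ γ := by
        rw [hεdef, ← Real.rpow_sub hx0]
        congr 1
        rw [hγdef]; ring
      have e2 : ε * (a n) = (a n) ^ γ := by
        rw [hεdef, ← Real.rpow_add_one hx0.ne']
        congr 1
        rw [hγdef]; ring
      calc (K * (a n) ^ (-β)) / (2*ε) + (ε/2) * (a n)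
          = (K/2) * ((a n) ^ (-β) / ε) + (1/2) * (ε * (a n)) := by ring
        _ = (K/2) * (a n) ^ γ + (1/2) * (a n) ^ γ := by rw [e1, e2]
        _ = ((K+1)/2) * (a n) ^ γ := by ring
    calc (∫ s in Ioc (a n) (a (n+1)), Z s)
        ≤ (∫ s in Ioc (a n) (a (n+1)), Z s ^ 2) / (2*ε) + (ε/2) * (a n) := by
          rw [← hb2]; exact hb1
      _ ≤ (K * (a n) ^ (-β)) / (2*ε) + (ε/2) * (a n) := by
          gcongr
      _ = ((K+1)/2) * (a n) ^ γ := halg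
      _ = D * r ^ n := by rw [hpow n, hDdef]; ring
  -- summing the pieces
  have hsum : ∀ N : ℕ, (∫ s in Ioc (a 0) (a N), Z s) ≤ D * (1-r)⁻¹ := by
    have hsum' : ∀ N : ℕ, (∫ s in Ioc (a 0) (a N), Z s) ≤ ∑ k ∈ Finset.range N, D * r ^ k := by
      intro N
      induction N with
      | zero => simp
      | succ N ihN =>
        have h1 : Ioc (a 0) (a N) ∪ Ioc (a N) (a (N+1)) = Ioc (a 0) (a (N+1)) :=
          Ioc_union_Ioc_eq_Ioc (hamono 0 N (Nat.zero_le N)) (hamono N (N+1) (Nat.le_succ N))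
        have h2 : Disjoint (Ioc (a 0) (a N)) (Ioc (a N) (a (N+1))) := by
          rw [Set.Ioc_disjoint_Ioc]
          exact le_trans (min_le_left _ _) (le_max_right _ _)
        rw [← h1, setIntegral_union h2 measurableSet_Ioc
          (hZIoc _ _ (ha0pos 0)) (hZIoc _ _ (ha0pos N)), Finset.sum_range_succ]
        exact add_le_add ihN (hpiece N)
    intro N
    refine le_trans (hsum' N) ?_
    rw [← Finset.mul_sum]
    refine mul_le_mul_of_nonneg_left ?_ hD0.le
    exact sum_le_hasSum _ (fun i _ => pow_nonneg hr0.le i) (hasSum_geometric_of_lt_one hr0.le hr1)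
  -- conclude
  have haTop : Tendsto a atTop atTop := by
    have h2 : Tendsto (fun n : ℕ => (2:ℝ) ^ n) atTop atTop :=
      tendsto_pow_atTop_atTop_of_one_lt (by norm_num)
    simpa only [hadef] using h2.const_mul_atTop hT00
  have hInt1 : IntegrableOn Z (Ioi (a 0)) volume := by
    refine integrableOn_Ioi_of_intervalIntegral_norm_bounded (D * (1-r)⁻¹) (a 0)
      (fun n => hZIoc _ _ (ha0pos 0)) haTop ?_
    refine Eventually.of_forall fun n => ?_
    have h0N : a 0 ≤ a n := hamono 0 n (Nat.zero_le n)
    rw [intervalIntegral.integral_of_le h0N]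
    have hnorm : ∫ s in Ioc (a 0) (a n), ‖Z s‖ = ∫ s in Ioc (a 0) (a n), Z s := by
      refine setIntegral_congr_fun measurableSet_Ioc fun s hs => ?_
      rw [Real.norm_eq_abs, abs_of_nonneg (hZnn s (lt_trans (ha0pos 0) hs.1))]
    rw [hnorm]
    exact hsum n
  have hInt2 : IntegrableOn Z (Ioc tstar (a 0)) volume := hZIoc _ _ ht
  have hta0 : tstar ≤ a 0 := le_trans hT0t (haT 0)
  have hfin : IntegrableOn Z (Ioc tstar (a 0) ∪ Ioi (a 0)) volume := hInt2.union hInt1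
  rwa [Ioc_union_Ioi_eq_Ioi hta0] at hfin
end

section
/- Let W : (0,∞) → [0,∞) be measurable with W ∈ L²(0,∞), let g : (0,∞) → [0,∞) be measurable with g ∈ L²(0,∞), and let constants 0 < a ≤ b be given. Assume that for every t > 0 and almost every s ∈ (0,t] one has a·W(t)² ≤ b·W(s)² + (∫ₛᵗ W(τ)² dτ)^{1/2} · (∫ₛᵗ g(τ)² dτ)^{1/2}. Then W(t) → 0 as t → ∞. -/
open MeasureTheory Set Filter

/-- Tail smallness of the integral of a square-integrable function on `(0,∞)`. -/
lemma stmt10_tail_small {f : ℝ → ℝ}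
    (hf : IntegrableOn (fun t => f t ^ 2) (Set.Ioi 0) volume) {δ : ℝ} (hδ : 0 < δ) :
    ∃ N : ℕ, ∫ τ in Set.Ioi (N : ℝ), f τ ^ 2 < δ := by
  have hU : ⋃ n : ℕ, Set.Ioc (0:ℝ) n = Set.Ioi 0 := by
    ext x
    simp only [mem_iUnion, mem_Ioc, mem_Ioi]
    constructor
    · rintro ⟨n, h1, _⟩; exact h1
    · intro hx; obtain ⟨n, hn⟩ := exists_nat_gt x; exact ⟨n, hx, hn.le⟩
  have hmono : Monotone (fun n : ℕ => Set.Ioc (0:ℝ) n) := fun m n hmn =>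
    Set.Ioc_subset_Ioc le_rfl (by exact_mod_cast hmn)
  have htend := tendsto_setIntegral_of_monotone (fun n : ℕ => measurableSet_Ioc) hmono
    (hU ▸ hf)
  rw [hU] at htend
  have hev : ∀ᶠ n : ℕ in atTop,
      (∫ τ in Set.Ioi (0:ℝ), f τ ^ 2) - δ < ∫ τ in Set.Ioc (0:ℝ) n, f τ ^ 2 := by
    have : Set.Ioi ((∫ τ in Set.Ioi (0:ℝ), f τ ^ 2) - δ) ∈
        nhds (∫ τ in Set.Ioi (0:ℝ), f τ ^ 2) := Ioi_mem_nhds (by linarith)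
    exact htend.eventually_mem this
  obtain ⟨n, hn⟩ := hev.exists
  refine ⟨n, ?_⟩
  have hsplit : ∫ τ in Set.Ioi (0:ℝ), f τ ^ 2 =
      (∫ τ in Set.Ioc (0:ℝ) n, f τ ^ 2) + ∫ τ in Set.Ioi (n:ℝ), f τ ^ 2 := by
    rw [← setIntegral_union (Set.Ioc_disjoint_Ioi le_rfl) measurableSet_Ioi
      (hf.mono_set Set.Ioc_subset_Ioi_self)
      (hf.mono_set (Set.Ioi_subset_Ioi (Nat.cast_nonneg n))),
      Set.Ioc_union_Ioi_eq_Ioi (Nat.cast_nonneg n)]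
  linarith

/-- **Decay of the kinetic energy.**
Let `W, g ≥ 0` be measurable with `W, g ∈ L²(0,∞)` and `0 < a ≤ b`. If for every `t > 0`
and almost every `s ∈ (0,t]` one has
`a W(t)² ≤ b W(s)² + (∫ₛᵗ W²)^{1/2} (∫ₛᵗ g²)^{1/2}`, then `W(t) → 0` as `t → ∞`. -/
theorem stmt10 (W g : ℝ → ℝ) (a b : ℝ)
    (hWmeas : Measurable W) (hWnn : ∀ t ∈ Set.Ioi (0 : ℝ), 0 ≤ W t)
    (hWL2 : IntegrableOn (fun t => W t ^ 2) (Set.Ioi 0) volume)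
    (hgmeas : Measurable g) (hgnn : ∀ t ∈ Set.Ioi (0 : ℝ), 0 ≤ g t)
    (hgL2 : IntegrableOn (fun t => g t ^ 2) (Set.Ioi 0) volume)
    (ha : 0 < a) (hab : a ≤ b)
    (hineq : ∀ t > (0 : ℝ), ∀ᵐ s ∂(volume.restrict (Set.Ioc 0 t)),
        a * W t ^ 2 ≤ b * W s ^ 2 +
          (∫ τ in Set.Ioc s t, W τ ^ 2) ^ ((1 : ℝ) / 2) *
            (∫ τ in Set.Ioc s t, g τ ^ 2) ^ ((1 : ℝ) / 2)) :
    Tendsto W atTop (nhds 0) := by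
  have hb : 0 < b := lt_of_lt_of_le ha hab
  -- Key step: `W t ^ 2` is eventually small.
  have key : ∀ ε > (0:ℝ), ∀ᶠ t in atTop, W t ^ 2 < ε := by
    intro ε hε
    set δ := a * ε / (2 * (b + 1)) with hδdef
    have hδ : 0 < δ := by positivity
    obtain ⟨N₁, hN₁⟩ := stmt10_tail_small hWL2 hδ
    obtain ⟨N₂, hN₂⟩ := stmt10_tail_small hgL2 hδ
    set N : ℕ := max N₁ N₂ with hNdef
    have hNnn : (0:ℝ) ≤ (N:ℝ) := Nat.cast_nonneg N
    have hsub1 : Set.Ioi ((N:ℝ)) ⊆ Set.Ioi (N₁ : ℝ) :=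
      Set.Ioi_subset_Ioi (by exact_mod_cast le_max_left N₁ N₂)
    have hsub2 : Set.Ioi ((N:ℝ)) ⊆ Set.Ioi (N₂ : ℝ) :=
      Set.Ioi_subset_Ioi (by exact_mod_cast le_max_right N₁ N₂)
    have hsubN : Set.Ioi ((N:ℝ)) ⊆ Set.Ioi (0:ℝ) := Set.Ioi_subset_Ioi hNnn
    have hWtail : ∫ τ in Set.Ioi (N:ℝ), W τ ^ 2 < δ := by
      refine lt_of_le_of_lt ?_ hN₁
      exact setIntegral_mono_set (hWL2.mono_set (Set.Ioi_subset_Ioi (Nat.cast_nonneg N₁)))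
        (Eventually.of_forall fun τ => sq_nonneg _) (HasSubset.Subset.eventuallyLE hsub1)
    have hgtail : ∫ τ in Set.Ioi (N:ℝ), g τ ^ 2 < δ := by
      refine lt_of_le_of_lt ?_ hN₂
      exact setIntegral_mono_set (hgL2.mono_set (Set.Ioi_subset_Ioi (Nat.cast_nonneg N₂)))
        (Eventually.of_forall fun τ => sq_nonneg _) (HasSubset.Subset.eventuallyLE hsub2)
    filter_upwards [eventually_ge_atTop ((N:ℝ) + 1)] with t ht
    have htN : (N:ℝ) < t := by linarith
    have htpos : 0 < t := by linarith
    have hWint : IntegrableOn (fun τ => W τ ^ 2) (Set.Ioc (N:ℝ) t) volume :=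
      hWL2.mono_set (fun τ hτ => lt_of_le_of_lt hNnn hτ.1)
    -- find a good point s
    have hexists : ∃ s ∈ Set.Ioc ((N:ℝ)) t,
        (a * W t ^ 2 ≤ b * W s ^ 2 +
          (∫ τ in Set.Ioc s t, W τ ^ 2) ^ ((1 : ℝ) / 2) *
            (∫ τ in Set.Ioc s t, g τ ^ 2) ^ ((1 : ℝ) / 2)) ∧ W s ^ 2 ≤ δ := by
      by_contra hcon
      push_neg at hcon
      have hres : ∀ᵐ s ∂(volume.restrict (Set.Ioc (N:ℝ) t)),
          a * W t ^ 2 ≤ b * W s ^ 2 +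
            (∫ τ in Set.Ioc s t, W τ ^ 2) ^ ((1 : ℝ) / 2) *
              (∫ τ in Set.Ioc s t, g τ ^ 2) ^ ((1 : ℝ) / 2) :=
        (hineq t htpos).filter_mono
          (ae_mono (Measure.restrict_mono (Set.Ioc_subset_Ioc hNnn le_rfl) le_rfl))
      have hae : ∀ᵐ s ∂(volume.restrict (Set.Ioc (N:ℝ) t)), δ ≤ W s ^ 2 := by
        filter_upwards [hres, ae_restrict_mem measurableSet_Ioc] with s hs hmem
        exact (lt_of_lt_of_le (hcon s hmem hs) le_rfl).le
      have hint1 : δ * (t - N) ≤ ∫ s in Set.Ioc ((N:ℝ)) t, W s ^ 2 := by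
        have h := integral_mono_ae (integrable_const δ) hWint hae
        rwa [setIntegral_const, measureReal_def, Real.volume_Ioc, smul_eq_mul,
          ENNReal.toReal_ofReal (by linarith), mul_comm] at h
      have hle : ∫ s in Set.Ioc ((N:ℝ)) t, W s ^ 2 ≤ ∫ τ in Set.Ioi (N:ℝ), W τ ^ 2 :=
        setIntegral_mono_set (hWL2.mono_set hsubN)
          (Eventually.of_forall fun τ => sq_nonneg _)
          (HasSubset.Subset.eventuallyLE Set.Ioc_subset_Ioi_self)
      have hδle : δ ≤ δ * (t - N) := le_mul_of_one_le_right hδ.le (by linarith)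
      linarith
    obtain ⟨s, hsmem, hPs, hWs⟩ := hexists
    have hssub : Set.Ioc s t ⊆ Set.Ioi (N:ℝ) := fun τ hτ => hsmem.1.trans hτ.1
    have hIW : ∫ τ in Set.Ioc s t, W τ ^ 2 ≤ δ :=
      le_of_lt (lt_of_le_of_lt (setIntegral_mono_set (hWL2.mono_set hsubN)
        (Eventually.of_forall fun τ => sq_nonneg _)
        (HasSubset.Subset.eventuallyLE hssub)) hWtail)
    have hIg : ∫ τ in Set.Ioc s t, g τ ^ 2 ≤ δ :=
      le_of_lt (lt_of_le_of_lt (setIntegral_mono_set (hgL2.mono_set hsubN)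
        (Eventually.of_forall fun τ => sq_nonneg _)
        (HasSubset.Subset.eventuallyLE hssub)) hgtail)
    have hIWnn : 0 ≤ ∫ τ in Set.Ioc s t, W τ ^ 2 :=
      setIntegral_nonneg measurableSet_Ioc fun τ _ => sq_nonneg _
    have hIgnn : 0 ≤ ∫ τ in Set.Ioc s t, g τ ^ 2 :=
      setIntegral_nonneg measurableSet_Ioc fun τ _ => sq_nonneg _
    have hrW : (∫ τ in Set.Ioc s t, W τ ^ 2) ^ ((1:ℝ)/2) ≤ δ ^ ((1:ℝ)/2) :=
      Real.rpow_le_rpow hIWnn hIW (by norm_num)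
    have hrg : (∫ τ in Set.Ioc s t, g τ ^ 2) ^ ((1:ℝ)/2) ≤ δ ^ ((1:ℝ)/2) :=
      Real.rpow_le_rpow hIgnn hIg (by norm_num)
    have hδhalf : δ ^ ((1:ℝ)/2) * δ ^ ((1:ℝ)/2) = δ := by
      rw [← Real.rpow_add hδ]; norm_num
    have hprod : (∫ τ in Set.Ioc s t, W τ ^ 2) ^ ((1:ℝ)/2) *
        (∫ τ in Set.Ioc s t, g τ ^ 2) ^ ((1:ℝ)/2) ≤ δ := by
      calc (∫ τ in Set.Ioc s t, W τ ^ 2) ^ ((1:ℝ)/2) *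
          (∫ τ in Set.Ioc s t, g τ ^ 2) ^ ((1:ℝ)/2)
          ≤ δ ^ ((1:ℝ)/2) * δ ^ ((1:ℝ)/2) :=
            mul_le_mul hrW hrg (Real.rpow_nonneg hIgnn _) (Real.rpow_nonneg hδ.le _)
        _ = δ := hδhalf
    have hfin : a * W t ^ 2 ≤ (b + 1) * δ := by
      have h1 : b * W s ^ 2 ≤ b * δ := mul_le_mul_of_nonneg_left hWs hb.le
      nlinarith [hPs]
    have : W t ^ 2 ≤ ε / 2 := by
      rw [hδdef] at hfin
      have hcalc : (b + 1) * (a * ε / (2 * (b + 1))) = a * (ε / 2) := by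
        field_simp
      rw [hcalc] at hfin
      exact le_of_mul_le_mul_left hfin ha
    linarith
  -- Conclude `W ^ 2 → 0`, hence `W → 0`.
  have h2 : Tendsto (fun t => W t ^ 2) atTop (nhds 0) := by
    rw [NormedAddCommGroup.tendsto_nhds_zero]
    intro ε hε
    filter_upwards [key ε hε] with t ht
    rwa [Real.norm_eq_abs, abs_of_nonneg (sq_nonneg _)]
  have h3 : Tendsto (fun t => Real.sqrt (W t ^ 2)) atTop (nhds 0) := by
    have := (Real.continuous_sqrt.tendsto 0).comp h2
    rw [Real.sqrt_zero] at this
    exact this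
  have heq : (fun t => Real.sqrt (W t ^ 2)) =ᶠ[atTop] W := by
    filter_upwards [eventually_gt_atTop (0:ℝ)] with t ht
    rw [Real.sqrt_sq (hWnn t ht)]
  exact h3.congr' heq
end
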